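/- Let F : [0,π]² → ℝ be bounded and measurable, and for x ∈ [0,π] let κ_x be the integral operator on L²([0,x]) with kernel k(t,s) := −F(s,t). Assume each Id − κ_x is invertible on L²([0,x]) and R := sup_{x∈[0,π]} ‖(Id−κ_x)^{−1}‖_{L²→L²} < ∞. Suppose that for each x ∈ [0,π] the function K(x,·) ∈ L²([0,x]) satisfies the Gel'fand–Levitan equation K(x,y) + F(x,y) + ∫_0^x K(x,t)F(t,y) dt = 0 for y ∈ [0,x]. Then for all 0 ≤ y ≤ x ≤ π one has |K(x,y)| ≤ ‖F‖_{L^∞} ( 1 + π^{3/2} ‖F‖_{L^∞} R ). -/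

import Mathlib

open MeasureTheory
open scoped ENNReal

/-- Uniform bound on the Gel'fand–Levitan kernel: if `|F| ≤ CF` on `[0,π]²`,
each `Id − κ_x` (kernel `k(t,s) = −F(s,t)`) is invertible on `L²([0,x])` with
`sup_x ‖(Id−κ_x)⁻¹‖ ≤ R`, and `K(x,·)` solves the Gel'fand–Levitan equation,
then `|K(x,y)| ≤ CF (1 + π^{3/2} CF R)` for all `0 ≤ y ≤ x ≤ π`. -/
theorem stmt8 (F : ℝ → ℝ → ℝ)
    (hFmeas : Measurable (Function.uncurry F))
    (CF : ℝ) (hCF : 0 ≤ CF)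
    (hFbdd : ∀ x ∈ Set.Icc (0 : ℝ) Real.pi, ∀ y ∈ Set.Icc (0 : ℝ) Real.pi, |F x y| ≤ CF)
    (R : ℝ) (hR : 0 ≤ R)
    -- each `Id − κ_x` is invertible on `L²([0,x])` ...
    (hsolve : ∀ x ∈ Set.Icc (0 : ℝ) Real.pi, ∀ f : ℝ → ℝ,
      MemLp f 2 (volume.restrict (Set.Icc (0 : ℝ) x)) →
      ∃ u : ℝ → ℝ, MemLp u 2 (volume.restrict (Set.Icc (0 : ℝ) x)) ∧
        ∀ᵐ t ∂(volume.restrict (Set.Icc (0 : ℝ) x)),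
          u t - ∫ s in Set.Icc (0 : ℝ) x, (-F s t) * u s = f t)
    -- ... with `sup_{x∈[0,π]} ‖(Id−κ_x)⁻¹‖_{L²→L²} ≤ R`:
    (hbound : ∀ x ∈ Set.Icc (0 : ℝ) Real.pi, ∀ v : ℝ → ℝ,
      MemLp v 2 (volume.restrict (Set.Icc (0 : ℝ) x)) →
      eLpNorm v 2 (volume.restrict (Set.Icc (0 : ℝ) x)) ≤
        ENNReal.ofReal R *
          eLpNorm (fun t => v t - ∫ s in Set.Icc (0 : ℝ) x, (-F s t) * v s) 2
            (volume.restrict (Set.Icc (0 : ℝ) x)))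
    (K : ℝ → ℝ → ℝ)
    (hKL2 : ∀ x ∈ Set.Icc (0 : ℝ) Real.pi,
      MemLp (K x) 2 (volume.restrict (Set.Icc (0 : ℝ) x)))
    (hKeq : ∀ x ∈ Set.Icc (0 : ℝ) Real.pi, ∀ y ∈ Set.Icc (0 : ℝ) x,
      K x y + F x y + ∫ t in Set.Icc (0 : ℝ) x, K x t * F t y = 0) :
    ∀ x y : ℝ, 0 ≤ y → y ≤ x → x ≤ Real.pi →
      |K x y| ≤ CF * (1 + Real.pi ^ ((3 : ℝ) / 2) * CF * R) := by
  intro x y hy0 hyx hxpi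
  have hx : x ∈ Set.Icc (0 : ℝ) Real.pi := ⟨hy0.trans hyx, hxpi⟩
  have hyI : y ∈ Set.Icc (0 : ℝ) x := ⟨hy0, hyx⟩
  have hypi : y ∈ Set.Icc (0 : ℝ) Real.pi := ⟨hy0, hyx.trans hxpi⟩
  set μ := volume.restrict (Set.Icc (0 : ℝ) x) with hμ
  have hKx : MemLp (K x) 2 μ := hKL2 x hx
  have hKxI : Integrable (K x) μ := hKx.integrable (by norm_num)
  -- the function t ↦ K x t - ∫ (-F s t) K x s equals -F x t on [0,x]
  have hgeq : ∀ t ∈ Set.Icc (0 : ℝ) x,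
      K x t - ∫ s in Set.Icc (0 : ℝ) x, (-F s t) * K x s = -F x t := by
    intro t ht
    have h1 := hKeq x hx t ht
    have h2 : (∫ s in Set.Icc (0 : ℝ) x, (-F s t) * K x s)
        = -∫ s in Set.Icc (0 : ℝ) x, K x s * F s t := by
      rw [← integral_neg]
      exact integral_congr_ae (ae_of_all _ fun s => by ring)
    rw [h2]; linarith
  have hgae : ∀ᵐ t ∂μ,
      (fun t => K x t - ∫ s in Set.Icc (0 : ℝ) x, (-F s t) * K x s) t
        = (fun t => -F x t) t :=
    (ae_restrict_iff' measurableSet_Icc).2 (ae_of_all _ hgeq)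
  -- L² bound on -F x ·
  have hFx_bd : ∀ᵐ t ∂μ, ‖(-F x t : ℝ)‖ ≤ CF := by
    refine (ae_restrict_iff' measurableSet_Icc).2 (ae_of_all _ fun t ht => ?_)
    rw [Real.norm_eq_abs, abs_neg]
    exact hFbdd x hx t ⟨ht.1, ht.2.trans hxpi⟩
  have hμuniv : μ Set.univ = ENNReal.ofReal x := by
    rw [Measure.restrict_apply_univ, Real.volume_Icc, sub_zero]
  -- chain of eLpNorm bounds
  have hK2 : eLpNorm (K x) 2 μ ≤
      ENNReal.ofReal R * (ENNReal.ofReal x ^ (2 : ℝ)⁻¹ * ENNReal.ofReal CF) := by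
    refine (hbound x hx (K x) hKx).trans ?_
    refine mul_le_mul_right ?_ _
    rw [eLpNorm_congr_ae hgae]
    refine (eLpNorm_le_of_ae_bound hFx_bd).trans ?_
    rw [hμuniv]
    norm_num
  have hK1 : eLpNorm (K x) 1 μ ≤ ENNReal.ofReal (R * CF * x) := by
    have h := eLpNorm_le_eLpNorm_mul_rpow_measure_univ (μ := μ)
      (p := 1) (q := 2) (by norm_num) hKx.aestronglyMeasurable
    have hexp : (1 : ℝ) / (1 : ℝ≥0∞).toReal - 1 / (2 : ℝ≥0∞).toReal = (2 : ℝ)⁻¹ := by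
      norm_num
    rw [hexp, hμuniv] at h
    refine h.trans (le_trans (mul_le_mul' hK2 le_rfl) (le_of_eq ?_))
    have hxx : ENNReal.ofReal x ^ (2 : ℝ)⁻¹ * ENNReal.ofReal x ^ (2 : ℝ)⁻¹
        = ENNReal.ofReal x := by
      rw [← ENNReal.rpow_add_of_nonneg _ _ (by norm_num) (by norm_num)]
      norm_num
    calc ENNReal.ofReal R * (ENNReal.ofReal x ^ (2 : ℝ)⁻¹ * ENNReal.ofReal CF)
          * ENNReal.ofReal x ^ (2 : ℝ)⁻¹
        = ENNReal.ofReal R * ENNReal.ofReal CF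
          * (ENNReal.ofReal x ^ (2 : ℝ)⁻¹ * ENNReal.ofReal x ^ (2 : ℝ)⁻¹) := by ring
      _ = ENNReal.ofReal R * ENNReal.ofReal CF * ENNReal.ofReal x := by rw [hxx]
      _ = ENNReal.ofReal (R * CF * x) := by
          rw [ENNReal.ofReal_mul (mul_nonneg hR hCF), ENNReal.ofReal_mul hR]
  -- real L¹ bound
  have hA : (∫ t, |K x t| ∂μ) ≤ R * CF * x := by
    have h1 : (∫ t, |K x t| ∂μ) = (eLpNorm (K x) 1 μ).toReal := by
      rw [eLpNorm_one_eq_lintegral_enorm,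
        ← integral_norm_eq_lintegral_enorm hKx.aestronglyMeasurable]
      simp [Real.norm_eq_abs]
    rw [h1]
    exact ENNReal.toReal_le_of_le_ofReal (mul_nonneg (mul_nonneg hR hCF) hx.1) hK1
  -- pointwise bound from the GL equation
  have hKy := hKeq x hx y hyI
  have hstep : |K x y| ≤ CF + CF * ∫ t, |K x t| ∂μ := by
    have hKval : K x y = -F x y - ∫ t in Set.Icc (0 : ℝ) x, K x t * F t y := by
      linarith
    rw [hKval]
    have h1 : |(-F x y - ∫ t in Set.Icc (0 : ℝ) x, K x t * F t y)|
        ≤ |F x y| + |∫ t in Set.Icc (0 : ℝ) x, K x t * F t y| := by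
      calc _ ≤ |(-F x y)| + |∫ t in Set.Icc (0 : ℝ) x, K x t * F t y| := abs_sub _ _
        _ = _ := by rw [abs_neg]
    refine h1.trans ?_
    have h2 : |∫ t, K x t * F t y ∂μ| ≤ ∫ t, |K x t| * |F t y| ∂μ := by
      simpa [Real.norm_eq_abs, abs_mul] using
        norm_integral_le_integral_norm (μ := μ) (f := fun t => K x t * F t y)
    have h3 : (∫ t, |K x t| * |F t y| ∂μ) ≤ ∫ t, CF * |K x t| ∂μ := by
      refine integral_mono_of_nonneg
        (ae_of_all _ fun t => mul_nonneg (abs_nonneg _) (abs_nonneg _))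
        (hKxI.abs.const_mul CF) ?_
      refine (ae_restrict_iff' measurableSet_Icc).2 (ae_of_all _ fun t ht => ?_)
      simp only [mul_comm]
      exact mul_le_mul_of_nonneg_right
        (hFbdd t ⟨ht.1, ht.2.trans hxpi⟩ y hypi) (abs_nonneg _)
    have h4 : (∫ t, CF * |K x t| ∂μ) = CF * ∫ t, |K x t| ∂μ := integral_const_mul _ _
    have hFy := hFbdd x hx y hypi
    rw [← h4]
    exact add_le_add hFy (h2.trans h3)
  -- conclude
  have hpi1 : (1 : ℝ) ≤ Real.pi := by linarith [Real.pi_gt_three]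
  have hpirpow : Real.pi ≤ Real.pi ^ ((3 : ℝ) / 2) := by
    nth_rewrite 1 [← Real.rpow_one Real.pi]
    exact Real.rpow_le_rpow_of_exponent_le hpi1 (by norm_num)
  have hAnn : 0 ≤ ∫ t, |K x t| ∂μ := integral_nonneg fun t => abs_nonneg _
  have hAx : (∫ t, |K x t| ∂μ) ≤ R * CF * Real.pi :=
    hA.trans (mul_le_mul_of_nonneg_left hxpi (mul_nonneg hR hCF))
  have h5 := mul_le_mul_of_nonneg_left hAx hCF
  have h6 := mul_le_mul_of_nonneg_right hpirpow
    (mul_nonneg (mul_nonneg hCF hCF) hR)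
  nlinarith [hstep, h5, h6]
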